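/- arXiv:1606.01848 — 2 statements merged into one kernel-verified Lean document; each statement's English description precedes it below -/
import Mathlib

section
/- The graph Ci₁₁(1,2,3)∖{v}, obtained from the circulant graph on 11 vertices in which each vertex is adjacent to its first, second, and third neighbors in both directions by deleting one vertex, admits no faithful orthogonal representation in ℂ⁵. -/
open Module

/-- An orthogonal representation (OR) of a simple graph `G` in `ℂ^d`: an injective map from the
vertices of `G` to one-dimensional subspaces of `ℂ^d` such that adjacent vertices are mapped to
orthogonal subspaces. -/
def IsOrthRep {V : Type*} (G : SimpleGraph V) (d : ℕ)
    (φ : V → Submodule ℂ (EuclideanSpace ℂ (Fin d))) : Prop :=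
  Function.Injective φ ∧ (∀ v, Module.finrank ℂ (φ v) = 1) ∧
    ∀ u v : V, G.Adj u v → φ u ≤ (φ v)ᗮ

/-- A faithful orthogonal representation (FOR) of a simple graph `G` in `ℂ^d`: an injective map
from the vertices of `G` to one-dimensional subspaces of `ℂ^d` such that two distinct vertices
are adjacent if and only if their images are orthogonal subspaces. -/
def IsFaithfulOrthRep {V : Type*} (G : SimpleGraph V) (d : ℕ)
    (φ : V → Submodule ℂ (EuclideanSpace ℂ (Fin d))) : Prop :=
  Function.Injective φ ∧ (∀ v, Module.finrank ℂ (φ v) = 1) ∧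
    ∀ u v : V, u ≠ v → (G.Adj u v ↔ φ u ≤ (φ v)ᗮ)

/-- `G` admits an orthogonal representation in `ℂ^d`. -/
def HasOR {V : Type*} (G : SimpleGraph V) (d : ℕ) : Prop := ∃ φ, IsOrthRep G d φ

/-- `G` admits a faithful orthogonal representation in `ℂ^d`. -/
def HasFOR {V : Type*} (G : SimpleGraph V) (d : ℕ) : Prop := ∃ φ, IsFaithfulOrthRep G d φ

/-- `ξ(G)`: the smallest dimension `d` such that `G` admits an orthogonal representation
in `ℂ^d`. -/
noncomputable def xi {V : Type*} (G : SimpleGraph V) : ℕ := sInf {d | HasOR G d}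

/-- `Ξ(G)`: the smallest dimension `d` such that `G` admits a faithful orthogonal representation
in `ℂ^d`. -/
noncomputable def Xi {V : Type*} (G : SimpleGraph V) : ℕ := sInf {d | HasFOR G d}

/-- A `b`-fold coloring of `G` with `a` colors: each vertex receives a set of `b` colors out of
`a` colors such that adjacent vertices receive disjoint sets. -/
def HasFoldColoring {V : Type*} (G : SimpleGraph V) (a b : ℕ) : Prop :=
  ∃ c : V → Finset (Fin a), (∀ v, (c v).card = b) ∧
    ∀ u v : V, G.Adj u v → Disjoint (c u) (c v)

/-- The fractional chromatic number `χ_f(G)`: the infimum of `a / b` over all `b`-fold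
colorings of `G` with `a` colors. -/
noncomputable def fracChrom {V : Type*} (G : SimpleGraph V) : ℝ :=
  sInf {x : ℝ | ∃ a b : ℕ, 0 < b ∧ HasFoldColoring G a b ∧ x = (a : ℝ) / b}

/-- The join `G₁ + G₂` of two graphs: their disjoint union together with one additional edge
between every pair of vertices taken one from each graph. -/
def graphJoin {V₁ V₂ : Type*} (G₁ : SimpleGraph V₁) (G₂ : SimpleGraph V₂) :
    SimpleGraph (V₁ ⊕ V₂) :=
  (G₁ ⊕g G₂) ⊔ completeBipartiteGraph V₁ V₂

open Submodule

noncomputable section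

local notation "⟪" x ", " y "⟫" => @inner ℂ _ _ x y
local notation "E5" => EuclideanSpace ℂ (Fin 5)

lemma exists_unit_span (p : Submodule ℂ E5) (h : Module.finrank ℂ p = 1) :
    ∃ u : E5, ‖u‖ = 1 ∧ p = Submodule.span ℂ {u} := by
  have hp : p ≠ ⊥ := by
    intro hbot
    rw [hbot] at h
    simp [finrank_bot] at h
  obtain ⟨u0, hu0mem, hu0⟩ := (Submodule.ne_bot_iff p).mp hp
  refine ⟨(‖u0‖⁻¹ : ℂ) • u0, norm_smul_inv_norm hu0, ?_⟩
  have hunit : IsUnit ((‖u0‖ : ℂ)⁻¹) := by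
    simp [isUnit_iff_ne_zero, inv_ne_zero, Complex.ofReal_ne_zero, norm_ne_zero_iff, hu0]
  have hspan : Submodule.span ℂ {((‖u0‖ : ℂ)⁻¹) • u0} = Submodule.span ℂ {u0} :=
    Submodule.span_singleton_smul_eq hunit u0
  have : (‖u0‖⁻¹ : ℂ) = ((‖u0‖:ℂ))⁻¹ := by norm_cast
  rw [this, hspan]
  symm
  apply Submodule.eq_of_le_of_finrank_eq
  · rwa [Submodule.span_singleton_le_iff_mem]
  · rw [finrank_span_singleton hu0, h]

-- orthogonality helpers
lemma span_orth_of_inner_zero {u w : E5} (h : ⟪u, w⟫ = 0) :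
    Submodule.span ℂ {u} ≤ (Submodule.span ℂ {w})ᗮ := by
  rw [Submodule.span_singleton_le_iff_mem]
  exact (Submodule.mem_orthogonal_singleton_iff_inner_left).mpr h

lemma inner_zero_of_span_orth {u w : E5} (h : Submodule.span ℂ {u} ≤ (Submodule.span ℂ {w})ᗮ) :
    ⟪u, w⟫ = 0 :=
  (Submodule.mem_orthogonal_singleton_iff_inner_left).mp
    (h (Submodule.mem_span_singleton_self u))


lemma exists_parseval (u1 u2 u3 u4 : E5) (h1 : ‖u1‖ = 1) (h2 : ‖u2‖ = 1) (h3 : ‖u3‖ = 1) (h4 : ‖u4‖ = 1)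
    (o12 : ⟪u1,u2⟫ = 0) (o13 : ⟪u1,u3⟫ = 0) (o14 : ⟪u1,u4⟫ = 0)
    (o21 : ⟪u2,u1⟫ = 0) (o23 : ⟪u2,u3⟫ = 0) (o24 : ⟪u2,u4⟫ = 0)
    (o31 : ⟪u3,u1⟫ = 0) (o32 : ⟪u3,u2⟫ = 0) (o34 : ⟪u3,u4⟫ = 0)
    (o41 : ⟪u4,u1⟫ = 0) (o42 : ⟪u4,u2⟫ = 0) (o43 : ⟪u4,u3⟫ = 0) :
    ∃ z : E5, ‖z‖ = 1 ∧ (∀ x y : E5,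
      ⟪x,y⟫ = ⟪x,u1⟫*⟪u1,y⟫ + ⟪x,u2⟫*⟪u2,y⟫ + ⟪x,u3⟫*⟪u3,y⟫ + ⟪x,u4⟫*⟪u4,y⟫ + ⟪x,z⟫*⟪z,y⟫) := by
  classical
  set B4 : Fin 4 → E5 := ![u1,u2,u3,u4] with hB4
  have honB4 : Orthonormal ℂ B4 := by
    rw [orthonormal_iff_ite]
    intro i j
    fin_cases i <;> fin_cases j <;>
      simp [hB4, inner_self_eq_norm_sq_to_K, h1, h2, h3, h4, o12, o13, o14, o21, o23, o24,
        o31, o32, o34, o41, o42, o43]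
  set S : Submodule ℂ E5 := Submodule.span ℂ (Set.range B4) with hS
  have hSne : Sᗮ ≠ ⊥ := by
    intro hbot
    rw [Submodule.orthogonal_eq_bot_iff] at hbot
    have htop := hbot
    have hfr : finrank ℂ S = 4 := by
      rw [hS, finrank_span_eq_card honB4.linearIndependent]
      simp
    rw [htop, finrank_top] at hfr
    rw [finrank_euclideanSpace_fin] at hfr
    norm_num at hfr
  obtain ⟨z0, hz0mem, hz0⟩ := (Submodule.ne_bot_iff _).mp hSne
  set z : E5 := (‖z0‖⁻¹ : ℂ) • z0 with hz
  have hzn : ‖z‖ = 1 := norm_smul_inv_norm hz0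
  have hzmem : z ∈ Sᗮ := Submodule.smul_mem _ _ hz0mem
  have huS : ∀ i : Fin 4, B4 i ∈ S := fun i => Submodule.subset_span (Set.mem_range_self i)
  have hoz : ∀ i : Fin 4, ⟪B4 i, z⟫ = 0 := fun i =>
    Submodule.inner_right_of_mem_orthogonal (huS i) hzmem
  have hzo : ∀ i : Fin 4, ⟪z, B4 i⟫ = 0 := fun i =>
    Submodule.inner_left_of_mem_orthogonal (huS i) hzmem
  set B : Fin 5 → E5 := ![u1,u2,u3,u4,z] with hB
  have hon : Orthonormal ℂ B := by
    rw [orthonormal_iff_ite]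
    intro i j
    have z1 := hoz 0; have z2 := hoz 1; have z3 := hoz 2; have z4 := hoz 3
    have y1 := hzo 0; have y2 := hzo 1; have y3 := hzo 2; have y4 := hzo 3
    simp only [hB4, Matrix.cons_val_zero, Matrix.cons_val_one, Matrix.head_cons,
      Matrix.cons_val_two, Matrix.tail_cons, Matrix.cons_val_three] at z1 z2 z3 z4 y1 y2 y3 y4
    fin_cases i <;> fin_cases j <;>
      simp [hB, inner_self_eq_norm_sq_to_K, h1, h2, h3, h4, hzn, o12, o13, o14, o21, o23, o24,
        o31, o32, o34, o41, o42, o43, z1, z2, z3, z4, y1, y2, y3, y4]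
  have hsp : ⊤ ≤ Submodule.span ℂ (Set.range B) := by
    rw [hon.linearIndependent.span_eq_top_of_card_eq_finrank]
    simp [finrank_euclideanSpace_fin]
  set ONB := OrthonormalBasis.mk hon hsp with hONB
  refine ⟨z, hzn, fun x y => ?_⟩
  have hps := ONB.sum_inner_mul_inner x y
  rw [← hps, hONB]
  simp only [OrthonormalBasis.coe_mk]
  rw [Fin.sum_univ_five]
  simp [hB]

end


local notation "K" => (starRingEnd ℂ)

set_option maxHeartbeats 4000000 in
lemma keylemma (a b c1 c2 c d1 d2 d3 d e1 e2 e3 e4 e f2 f3 f4 f g3 g4 g : ℂ)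
    (hb : b ≠ 0) (hc2 : c2 ≠ 0) (hd3 : d3 ≠ 0) (he4 : e4 ≠ 0) (hf : f ≠ 0) (hg : g ≠ 0)
    (E56 : K a * c1 + K b * c = 0) (E56c : a * K c1 + b * K c = 0)
    (E57 : K a * d1 + K b * d = 0) (E57c : a * K d1 + b * K d = 0)
    (E58 : K a * e1 + K b * e = 0) (E58c : a * K e1 + b * K e = 0)
    (E67 : K c1 * d1 + K c2 * d2 + K c * d = 0) (E67c : c1 * K d1 + c2 * K d2 + c * K d = 0)
    (E68 : K c1 * e1 + K c2 * e2 + K c * e = 0) (E68c : c1 * K e1 + c2 * K e2 + c * K e = 0)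
    (E69 : K c2 * f2 + K c * f = 0) (E69c : c2 * K f2 + c * K f = 0)
    (E78 : K d1 * e1 + K d2 * e2 + K d3 * e3 + K d * e = 0)
    (E78c : d1 * K e1 + d2 * K e2 + d3 * K e3 + d * K e = 0)
    (E79 : K d2 * f2 + K d3 * f3 + K d * f = 0)
    (E79c : d2 * K f2 + d3 * K f3 + d * K f = 0)
    (E710 : K d3 * g3 + K d * g = 0)
    (E89 : K e2 * f2 + K e3 * f3 + K e4 * f4 + K e * f = 0)
    (E89c : e2 * K f2 + e3 * K f3 + e4 * K f4 + e * K f = 0)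
    (E810 : K e3 * g3 + K e4 * g4 + K e * g = 0)
    (E910 : K f3 * g3 + K f4 * g4 + K f * g = 0) : False := by
  have hF1 : K c1 * d1 * (a * K a + b * K b) + b * K b * (K c2 * d2) = 0 := by
    linear_combination (b * K b) * E67 + (a * K c1) * E57 - (K b * d) * E56c
  have h1 : c1 * K d1 * (a * K a + b * K b) + b * K b * (c2 * K d2) = 0 := by
    linear_combination (b * K b) * E67c + (K a * c1) * E57c - (b * K d) * E56
  have h2 : K c1 * e1 * (a * K a + b * K b) + b * K b * (K c2 * e2) = 0 := by
    linear_combination (b * K b) * E68 + (a * K c1) * E58 - (K b * e) * E56c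
  have h2c : c1 * K e1 * (a * K a + b * K b) + b * K b * (c2 * K e2) = 0 := by
    linear_combination (b * K b) * E68c + (K a * c1) * E58c - (b * K e) * E56
  have h3 : (b * K b)^2 * (c2 * K c2) * (K d3 * e3) + K d1 * e1 * (a * K a + b * K b) * (b * K b * (c2 * K c2) + c1 * K c1 * (a * K a + b * K b)) = 0 := by
    linear_combination (b * K b)^2 * (c2 * K c2) * E78 - (b * K b * (K c2 * e2)) * h1
      + (c1 * K d1 * (a * K a + b * K b)) * h2
      - (b * K b * (c2 * K c2)) * ((K b * e) * E57c - (a * K d1) * E58)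
  have h3c : (b * K b)^2 * (c2 * K c2) * (d3 * K e3) + d1 * K e1 * (a * K a + b * K b) * (b * K b * (c2 * K c2) + c1 * K c1 * (a * K a + b * K b)) = 0 := by
    linear_combination (b * K b)^2 * (c2 * K c2) * E78c - (b * K b * (c2 * K e2)) * hF1
      + (K c1 * d1 * (a * K a + b * K b)) * h2c
      - (b * K b * (c2 * K c2)) * ((b * K e) * E57 - (K a * d1) * E58c)
  have h4 : b * K c2 * f2 - a * K c1 * f = 0 := by
    linear_combination b * E69 - f * E56c
  have h4c : K b * c2 * K f2 - K a * c1 * K f = 0 := by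
    linear_combination K b * E69c - K f * E56
  have h5 : b^2 * K b * (c2 * K c2) * (K d3 * f3) - a * K d1 * f * (b * K b * (c2 * K c2) + c1 * K c1 * (a * K a + b * K b)) = 0 := by
    linear_combination (b^2 * K b * (c2 * K c2)) * E79 - (b * K c2 * f2) * h1
      + (c1 * K d1 * (a * K a + b * K b)) * h4 - (b * K b * (c2 * K c2) * f) * E57c
  have h5c : (K b)^2 * b * (c2 * K c2) * (d3 * K f3) - K a * d1 * K f * (b * K b * (c2 * K c2) + c1 * K c1 * (a * K a + b * K b)) = 0 := by
    linear_combination ((K b)^2 * b * (c2 * K c2)) * E79c - (K b * c2 * K f2) * hF1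
      + (K c1 * d1 * (a * K a + b * K b)) * h4c - (K b * b * (c2 * K c2) * K f) * E57
  have h6 : b^4 * (K b)^3 * (c2 * K c2)^2 * (d3 * K d3) * (K e4 * f4)
      - a * K e1 * f * (b * K b * (c2 * K c2) + c1 * K c1 * (a * K a + b * K b)) * ((b * K b)^2 * (c2 * K c2) * (d3 * K d3) + d1 * K d1 * (a * K a + b * K b) * (b * K b * (c2 * K c2) + c1 * K c1 * (a * K a + b * K b))) = 0 := by
    linear_combination (b^4 * (K b)^3 * (c2 * K c2)^2 * (d3 * K d3)) * E89
      - (b^2 * (K b)^2 * (c2 * K c2) * (d3 * K d3)) * ((b * K c2 * f2) * h2c - (c1 * K e1 * (a * K a + b * K b)) * h4)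
      - ((b^2 * K b * (c2 * K c2) * (K d3 * f3)) * h3c - (d1 * K e1 * (a * K a + b * K b) * (b * K b * (c2 * K c2) + c1 * K c1 * (a * K a + b * K b))) * h5)
      - (b^3 * (K b)^3 * (c2 * K c2)^2 * (d3 * K d3) * f) * E58c
  have h6c : (K b)^4 * b^3 * (c2 * K c2)^2 * (d3 * K d3) * (e4 * K f4)
      - K a * e1 * K f * (b * K b * (c2 * K c2) + c1 * K c1 * (a * K a + b * K b)) * ((b * K b)^2 * (c2 * K c2) * (d3 * K d3) + d1 * K d1 * (a * K a + b * K b) * (b * K b * (c2 * K c2) + c1 * K c1 * (a * K a + b * K b))) = 0 := by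
    linear_combination ((K b)^4 * b^3 * (c2 * K c2)^2 * (d3 * K d3)) * E89c
      - (b^2 * (K b)^2 * (c2 * K c2) * (d3 * K d3)) * ((K b * c2 * K f2) * h2 - (K c1 * e1 * (a * K a + b * K b)) * h4c)
      - (((K b)^2 * b * (c2 * K c2) * (d3 * K f3)) * h3 - (K d1 * e1 * (a * K a + b * K b) * (b * K b * (c2 * K c2) + c1 * K c1 * (a * K a + b * K b))) * h5c)
      - ((K b)^3 * b^3 * (c2 * K c2)^2 * (d3 * K d3) * K f) * E58
  have h7 : b * K d3 * g3 - a * K d1 * g = 0 := by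
    linear_combination b * E710 - g * E57c
  have h8 : b^3 * (K b)^2 * (c2 * K c2) * (d3 * K d3) * (K e4 * g4)
      - a * K e1 * g * ((b * K b)^2 * (c2 * K c2) * (d3 * K d3) + d1 * K d1 * (a * K a + b * K b) * (b * K b * (c2 * K c2) + c1 * K c1 * (a * K a + b * K b))) = 0 := by
    linear_combination (b^3 * (K b)^2 * (c2 * K c2) * (d3 * K d3)) * E810
      - (b * K d3 * g3) * h3c + (d1 * K e1 * (a * K a + b * K b) * (b * K b * (c2 * K c2) + c1 * K c1 * (a * K a + b * K b))) * h7
      - (b^2 * (K b)^2 * (c2 * K c2) * (d3 * K d3) * g) * E58c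
  have key : K f * g * (((b * K b)^6 * (c2 * K c2)^3 * (d3 * K d3)^2 * (e4 * K e4)) + (a * K a) * (d1 * K d1) * (b * K b * (c2 * K c2) + c1 * K c1 * (a * K a + b * K b)) * (b * K b)^4 * (c2 * K c2)^2 * (d3 * K d3) * (e4 * K e4) + (a * K a) * (e1 * K e1) * (b * K b * (c2 * K c2) + c1 * K c1 * (a * K a + b * K b)) * ((b * K b)^2 * (c2 * K c2) * (d3 * K d3) + d1 * K d1 * (a * K a + b * K b) * (b * K b * (c2 * K c2) + c1 * K c1 * (a * K a + b * K b)))^2) = 0 := by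
    linear_combination ((b * K b)^6 * (c2 * K c2)^3 * (d3 * K d3)^2 * (e4 * K e4)) * E910
      - ((b * K b)^4 * (c2 * K c2)^2 * (d3 * K d3) * (e4 * K e4)) *
          ((b * K d3 * g3) * h5c + (K a * d1 * K f * (b * K b * (c2 * K c2) + c1 * K c1 * (a * K a + b * K b))) * h7)
      - ((b^3 * (K b)^2 * (c2 * K c2) * (d3 * K d3) * (K e4 * g4)) * h6c
          + (K a * e1 * K f * (b * K b * (c2 * K c2) + c1 * K c1 * (a * K a + b * K b)) * ((b * K b)^2 * (c2 * K c2) * (d3 * K d3) + d1 * K d1 * (a * K a + b * K b) * (b * K b * (c2 * K c2) + c1 * K c1 * (a * K a + b * K b)))) * h8)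
  have hBR : (((b * K b)^6 * (c2 * K c2)^3 * (d3 * K d3)^2 * (e4 * K e4)) + (a * K a) * (d1 * K d1) * (b * K b * (c2 * K c2) + c1 * K c1 * (a * K a + b * K b)) * (b * K b)^4 * (c2 * K c2)^2 * (d3 * K d3) * (e4 * K e4) + (a * K a) * (e1 * K e1) * (b * K b * (c2 * K c2) + c1 * K c1 * (a * K a + b * K b)) * ((b * K b)^2 * (c2 * K c2) * (d3 * K d3) + d1 * K d1 * (a * K a + b * K b) * (b * K b * (c2 * K c2) + c1 * K c1 * (a * K a + b * K b)))^2) = ((((Complex.normSq b^6 * Complex.normSq c2^3 * Complex.normSq d3^2 * Complex.normSq e4) + Complex.normSq a * Complex.normSq d1 * (Complex.normSq b * Complex.normSq c2 + Complex.normSq c1 * (Complex.normSq a + Complex.normSq b)) * (Complex.normSq b^4 * Complex.normSq c2^2 * Complex.normSq d3 * Complex.normSq e4) + Complex.normSq a * Complex.normSq e1 * (Complex.normSq b * Complex.normSq c2 + Complex.normSq c1 * (Complex.normSq a + Complex.normSq b)) * (Complex.normSq b^2 * Complex.normSq c2 * Complex.normSq d3 + Complex.normSq d1 * (Complex.normSq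 a + Complex.normSq b) * (Complex.normSq b * Complex.normSq c2 + Complex.normSq c1 * (Complex.normSq a + Complex.normSq b)))^2) : ℝ) : ℂ) := by
    simp only [Complex.mul_conj]
    push_cast
    ring
  have pb : (0:ℝ) < Complex.normSq b := Complex.normSq_pos.mpr hb
  have pc2 : (0:ℝ) < Complex.normSq c2 := Complex.normSq_pos.mpr hc2
  have pd3 : (0:ℝ) < Complex.normSq d3 := Complex.normSq_pos.mpr hd3
  have pe4 : (0:ℝ) < Complex.normSq e4 := Complex.normSq_pos.mpr he4
  have na0 : (0:ℝ) ≤ Complex.normSq a := Complex.normSq_nonneg a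
  have nc10 : (0:ℝ) ≤ Complex.normSq c1 := Complex.normSq_nonneg c1
  have nd10 : (0:ℝ) ≤ Complex.normSq d1 := Complex.normSq_nonneg d1
  have ne10 : (0:ℝ) ≤ Complex.normSq e1 := Complex.normSq_nonneg e1
  have hNr : (0:ℝ) ≤ (Complex.normSq a + Complex.normSq b) := add_nonneg na0 pb.le
  have hPr : (0:ℝ) ≤ (Complex.normSq b * Complex.normSq c2 + Complex.normSq c1 * (Complex.normSq a + Complex.normSq b)) := add_nonneg (mul_nonneg pb.le pc2.le) (mul_nonneg nc10 hNr)
  have hRr : (0:ℝ) ≤ (Complex.normSq b^2 * Complex.normSq c2 * Complex.normSq d3 + Complex.normSq d1 * (Complex.normSq a + Complex.normSq b) * (Complex.normSq b * Complex.normSq c2 + Complex.normSq c1 * (Complex.normSq a + Complex.normSq b))) :=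
    add_nonneg (mul_nonneg (mul_nonneg (pow_nonneg pb.le 2) pc2.le) pd3.le)
      (mul_nonneg (mul_nonneg nd10 hNr) hPr)
  have hpos : (0:ℝ) < ((Complex.normSq b^6 * Complex.normSq c2^3 * Complex.normSq d3^2 * Complex.normSq e4) + Complex.normSq a * Complex.normSq d1 * (Complex.normSq b * Complex.normSq c2 + Complex.normSq c1 * (Complex.normSq a + Complex.normSq b)) * (Complex.normSq b^4 * Complex.normSq c2^2 * Complex.normSq d3 * Complex.normSq e4) + Complex.normSq a * Complex.normSq e1 * (Complex.normSq b * Complex.normSq c2 + Complex.normSq c1 * (Complex.normSq a + Complex.normSq b)) * (Complex.normSq b^2 * Complex.normSq c2 * Complex.normSq d3 + Complex.normSq d1 * (Complex.normSq a + Complex.normSq b) * (Complex.normSq b * Complex.normSq c2 + Complex.normSq c1 * (Complex.normSq a + Complex.normSq b)))^2) := by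
    have hM : (0:ℝ) < (Complex.normSq b^6 * Complex.normSq c2^3 * Complex.normSq d3^2 * Complex.normSq e4) :=
      mul_pos (mul_pos (mul_pos (pow_pos pb 6) (pow_pos pc2 3)) (pow_pos pd3 2)) pe4
    have hT2 : (0:ℝ) ≤ Complex.normSq a * Complex.normSq d1 * (Complex.normSq b * Complex.normSq c2 + Complex.normSq c1 * (Complex.normSq a + Complex.normSq b)) *
        (Complex.normSq b^4 * Complex.normSq c2^2 * Complex.normSq d3 * Complex.normSq e4) :=
      mul_nonneg (mul_nonneg (mul_nonneg na0 nd10) hPr)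
        (mul_nonneg (mul_nonneg (mul_nonneg (pow_nonneg pb.le 4) (pow_nonneg pc2.le 2)) pd3.le) pe4.le)
    have hT3 : (0:ℝ) ≤ Complex.normSq a * Complex.normSq e1 * (Complex.normSq b * Complex.normSq c2 + Complex.normSq c1 * (Complex.normSq a + Complex.normSq b)) * (Complex.normSq b^2 * Complex.normSq c2 * Complex.normSq d3 + Complex.normSq d1 * (Complex.normSq a + Complex.normSq b) * (Complex.normSq b * Complex.normSq c2 + Complex.normSq c1 * (Complex.normSq a + Complex.normSq b)))^2 :=
      mul_nonneg (mul_nonneg (mul_nonneg na0 ne10) hPr) (pow_nonneg hRr 2)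
    linarith
  rw [hBR, mul_eq_zero, mul_eq_zero] at key
  rcases key with (hK | hK) | hK
  · exact hf (by simpa using (map_eq_zero (starRingEnd ℂ)).mp hK)
  · exact hg hK
  · exact absurd (Complex.ofReal_eq_zero.mp hK) (ne_of_gt hpos)

section
set_option maxHeartbeats 1600000
local notation "⟪" x ", " y "⟫" => @inner ℂ _ _ x y

/-- The graph `Ci₁₁(1,2,3) ∖ {v}`, obtained from the circulant graph on
`ℤ/11ℤ` with connection set `{±1, ±2, ±3}` by deleting one vertex, admits no faithful
orthogonal representation in `ℂ⁵`. -/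
theorem stmt15 (v : ZMod 11) :
    ¬ HasFOR ((SimpleGraph.circulantGraph ({1, 2, 3} : Set (ZMod 11))).induce
      {i : ZMod 11 | i ≠ v}) 5 := by
  rintro ⟨φ, hinj, hrank, hiff⟩
  classical
  have hmem : ∀ k : ZMod 11, k ≠ 0 → v + k ∈ {i : ZMod 11 | i ≠ v} := by
    intro k hk
    simp only [Set.mem_setOf_eq]
    intro h
    exact hk (by rwa [add_eq_left] at h)
  have hadjiff : ∀ (i j : ZMod 11) (hi : i ≠ 0) (hj : j ≠ 0),
      ((SimpleGraph.circulantGraph ({1, 2, 3} : Set (ZMod 11))).induce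
        {i : ZMod 11 | i ≠ v}).Adj ⟨v + i, hmem i hi⟩ ⟨v + j, hmem j hj⟩ ↔
      (i ≠ j ∧ ((i - j = 1 ∨ i - j = 2 ∨ i - j = 3) ∨ (j - i = 1 ∨ j - i = 2 ∨ j - i = 3))) := by
    intro i j hi hj
    show (SimpleGraph.circulantGraph ({1, 2, 3} : Set (ZMod 11))).Adj (v + i) (v + j) ↔ _
    rw [SimpleGraph.circulantGraph, SimpleGraph.fromRel_adj]
    constructor
    · rintro ⟨hne, hor⟩
      refine ⟨fun h => hne (by rw [h]), ?_⟩
      simpa [add_sub_add_left_eq_sub, Set.mem_insert_iff, Set.mem_singleton_iff] using hor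
    · rintro ⟨hne, hor⟩
      refine ⟨by simpa using hne, ?_⟩
      simpa [add_sub_add_left_eq_sub, Set.mem_insert_iff, Set.mem_singleton_iff] using hor
  obtain ⟨u1, hun1, hus1⟩ := exists_unit_span (φ ⟨v + 1, hmem 1 (by decide)⟩) (hrank ⟨v + 1, hmem 1 (by decide)⟩)
  obtain ⟨u2, hun2, hus2⟩ := exists_unit_span (φ ⟨v + 2, hmem 2 (by decide)⟩) (hrank ⟨v + 2, hmem 2 (by decide)⟩)
  obtain ⟨u3, hun3, hus3⟩ := exists_unit_span (φ ⟨v + 3, hmem 3 (by decide)⟩) (hrank ⟨v + 3, hmem 3 (by decide)⟩)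
  obtain ⟨u4, hun4, hus4⟩ := exists_unit_span (φ ⟨v + 4, hmem 4 (by decide)⟩) (hrank ⟨v + 4, hmem 4 (by decide)⟩)
  obtain ⟨u5, hun5, hus5⟩ := exists_unit_span (φ ⟨v + 5, hmem 5 (by decide)⟩) (hrank ⟨v + 5, hmem 5 (by decide)⟩)
  obtain ⟨u6, hun6, hus6⟩ := exists_unit_span (φ ⟨v + 6, hmem 6 (by decide)⟩) (hrank ⟨v + 6, hmem 6 (by decide)⟩)
  obtain ⟨u7, hun7, hus7⟩ := exists_unit_span (φ ⟨v + 7, hmem 7 (by decide)⟩) (hrank ⟨v + 7, hmem 7 (by decide)⟩)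
  obtain ⟨u8, hun8, hus8⟩ := exists_unit_span (φ ⟨v + 8, hmem 8 (by decide)⟩) (hrank ⟨v + 8, hmem 8 (by decide)⟩)
  obtain ⟨u9, hun9, hus9⟩ := exists_unit_span (φ ⟨v + 9, hmem 9 (by decide)⟩) (hrank ⟨v + 9, hmem 9 (by decide)⟩)
  obtain ⟨u10, hun10, hus10⟩ := exists_unit_span (φ ⟨v + 10, hmem 10 (by decide)⟩) (hrank ⟨v + 10, hmem 10 (by decide)⟩)
  have orthAdj : ∀ (p q : {i : ZMod 11 | i ≠ v}) (up uq : EuclideanSpace ℂ (Fin 5)),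
      φ p = Submodule.span ℂ {up} → φ q = Submodule.span ℂ {uq} →
      ((SimpleGraph.circulantGraph ({1, 2, 3} : Set (ZMod 11))).induce {i : ZMod 11 | i ≠ v}).Adj p q →
      ⟪up,uq⟫ = 0 := by
    intro p q up uq hp hq hA
    have hle := (hiff p q hA.ne).mp hA
    rw [hp, hq] at hle
    exact inner_zero_of_span_orth hle
  have orthNon : ∀ (p q : {i : ZMod 11 | i ≠ v}) (up uq : EuclideanSpace ℂ (Fin 5)),
      φ p = Submodule.span ℂ {up} → φ q = Submodule.span ℂ {uq} → p ≠ q →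
      ¬ ((SimpleGraph.circulantGraph ({1, 2, 3} : Set (ZMod 11))).induce {i : ZMod 11 | i ≠ v}).Adj p q →
      ⟪up,uq⟫ ≠ 0 := by
    intro p q up uq hp hq hne hnA h0
    exact hnA ((hiff p q hne).mpr (by rw [hp, hq]; exact span_orth_of_inner_zero h0))
  have Z_1_2 : ⟪u1,u2⟫ = 0 := orthAdj _ _ u1 u2 hus1 hus2 ((hadjiff 1 2 (by decide) (by decide)).mpr (by decide))
  have Z_1_3 : ⟪u1,u3⟫ = 0 := orthAdj _ _ u1 u3 hus1 hus3 ((hadjiff 1 3 (by decide) (by decide)).mpr (by decide))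
  have Z_1_4 : ⟪u1,u4⟫ = 0 := orthAdj _ _ u1 u4 hus1 hus4 ((hadjiff 1 4 (by decide) (by decide)).mpr (by decide))
  have Z_1_9 : ⟪u1,u9⟫ = 0 := orthAdj _ _ u1 u9 hus1 hus9 ((hadjiff 1 9 (by decide) (by decide)).mpr (by decide))
  have Z_1_10 : ⟪u1,u10⟫ = 0 := orthAdj _ _ u1 u10 hus1 hus10 ((hadjiff 1 10 (by decide) (by decide)).mpr (by decide))
  have Z_2_1 : ⟪u2,u1⟫ = 0 := orthAdj _ _ u2 u1 hus2 hus1 ((hadjiff 2 1 (by decide) (by decide)).mpr (by decide))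
  have Z_2_3 : ⟪u2,u3⟫ = 0 := orthAdj _ _ u2 u3 hus2 hus3 ((hadjiff 2 3 (by decide) (by decide)).mpr (by decide))
  have Z_2_4 : ⟪u2,u4⟫ = 0 := orthAdj _ _ u2 u4 hus2 hus4 ((hadjiff 2 4 (by decide) (by decide)).mpr (by decide))
  have Z_2_5 : ⟪u2,u5⟫ = 0 := orthAdj _ _ u2 u5 hus2 hus5 ((hadjiff 2 5 (by decide) (by decide)).mpr (by decide))
  have Z_2_10 : ⟪u2,u10⟫ = 0 := orthAdj _ _ u2 u10 hus2 hus10 ((hadjiff 2 10 (by decide) (by decide)).mpr (by decide))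
  have Z_3_1 : ⟪u3,u1⟫ = 0 := orthAdj _ _ u3 u1 hus3 hus1 ((hadjiff 3 1 (by decide) (by decide)).mpr (by decide))
  have Z_3_2 : ⟪u3,u2⟫ = 0 := orthAdj _ _ u3 u2 hus3 hus2 ((hadjiff 3 2 (by decide) (by decide)).mpr (by decide))
  have Z_3_4 : ⟪u3,u4⟫ = 0 := orthAdj _ _ u3 u4 hus3 hus4 ((hadjiff 3 4 (by decide) (by decide)).mpr (by decide))
  have Z_3_5 : ⟪u3,u5⟫ = 0 := orthAdj _ _ u3 u5 hus3 hus5 ((hadjiff 3 5 (by decide) (by decide)).mpr (by decide))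
  have Z_3_6 : ⟪u3,u6⟫ = 0 := orthAdj _ _ u3 u6 hus3 hus6 ((hadjiff 3 6 (by decide) (by decide)).mpr (by decide))
  have Z_4_1 : ⟪u4,u1⟫ = 0 := orthAdj _ _ u4 u1 hus4 hus1 ((hadjiff 4 1 (by decide) (by decide)).mpr (by decide))
  have Z_4_2 : ⟪u4,u2⟫ = 0 := orthAdj _ _ u4 u2 hus4 hus2 ((hadjiff 4 2 (by decide) (by decide)).mpr (by decide))
  have Z_4_3 : ⟪u4,u3⟫ = 0 := orthAdj _ _ u4 u3 hus4 hus3 ((hadjiff 4 3 (by decide) (by decide)).mpr (by decide))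
  have Z_4_5 : ⟪u4,u5⟫ = 0 := orthAdj _ _ u4 u5 hus4 hus5 ((hadjiff 4 5 (by decide) (by decide)).mpr (by decide))
  have Z_4_6 : ⟪u4,u6⟫ = 0 := orthAdj _ _ u4 u6 hus4 hus6 ((hadjiff 4 6 (by decide) (by decide)).mpr (by decide))
  have Z_4_7 : ⟪u4,u7⟫ = 0 := orthAdj _ _ u4 u7 hus4 hus7 ((hadjiff 4 7 (by decide) (by decide)).mpr (by decide))
  have Z_5_2 : ⟪u5,u2⟫ = 0 := orthAdj _ _ u5 u2 hus5 hus2 ((hadjiff 5 2 (by decide) (by decide)).mpr (by decide))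
  have Z_5_3 : ⟪u5,u3⟫ = 0 := orthAdj _ _ u5 u3 hus5 hus3 ((hadjiff 5 3 (by decide) (by decide)).mpr (by decide))
  have Z_5_4 : ⟪u5,u4⟫ = 0 := orthAdj _ _ u5 u4 hus5 hus4 ((hadjiff 5 4 (by decide) (by decide)).mpr (by decide))
  have Z_5_6 : ⟪u5,u6⟫ = 0 := orthAdj _ _ u5 u6 hus5 hus6 ((hadjiff 5 6 (by decide) (by decide)).mpr (by decide))
  have Z_5_7 : ⟪u5,u7⟫ = 0 := orthAdj _ _ u5 u7 hus5 hus7 ((hadjiff 5 7 (by decide) (by decide)).mpr (by decide))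
  have Z_5_8 : ⟪u5,u8⟫ = 0 := orthAdj _ _ u5 u8 hus5 hus8 ((hadjiff 5 8 (by decide) (by decide)).mpr (by decide))
  have Z_6_3 : ⟪u6,u3⟫ = 0 := orthAdj _ _ u6 u3 hus6 hus3 ((hadjiff 6 3 (by decide) (by decide)).mpr (by decide))
  have Z_6_4 : ⟪u6,u4⟫ = 0 := orthAdj _ _ u6 u4 hus6 hus4 ((hadjiff 6 4 (by decide) (by decide)).mpr (by decide))
  have Z_6_5 : ⟪u6,u5⟫ = 0 := orthAdj _ _ u6 u5 hus6 hus5 ((hadjiff 6 5 (by decide) (by decide)).mpr (by decide))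
  have Z_6_7 : ⟪u6,u7⟫ = 0 := orthAdj _ _ u6 u7 hus6 hus7 ((hadjiff 6 7 (by decide) (by decide)).mpr (by decide))
  have Z_6_8 : ⟪u6,u8⟫ = 0 := orthAdj _ _ u6 u8 hus6 hus8 ((hadjiff 6 8 (by decide) (by decide)).mpr (by decide))
  have Z_6_9 : ⟪u6,u9⟫ = 0 := orthAdj _ _ u6 u9 hus6 hus9 ((hadjiff 6 9 (by decide) (by decide)).mpr (by decide))
  have Z_7_4 : ⟪u7,u4⟫ = 0 := orthAdj _ _ u7 u4 hus7 hus4 ((hadjiff 7 4 (by decide) (by decide)).mpr (by decide))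
  have Z_7_5 : ⟪u7,u5⟫ = 0 := orthAdj _ _ u7 u5 hus7 hus5 ((hadjiff 7 5 (by decide) (by decide)).mpr (by decide))
  have Z_7_6 : ⟪u7,u6⟫ = 0 := orthAdj _ _ u7 u6 hus7 hus6 ((hadjiff 7 6 (by decide) (by decide)).mpr (by decide))
  have Z_7_8 : ⟪u7,u8⟫ = 0 := orthAdj _ _ u7 u8 hus7 hus8 ((hadjiff 7 8 (by decide) (by decide)).mpr (by decide))
  have Z_7_9 : ⟪u7,u9⟫ = 0 := orthAdj _ _ u7 u9 hus7 hus9 ((hadjiff 7 9 (by decide) (by decide)).mpr (by decide))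
  have Z_7_10 : ⟪u7,u10⟫ = 0 := orthAdj _ _ u7 u10 hus7 hus10 ((hadjiff 7 10 (by decide) (by decide)).mpr (by decide))
  have Z_8_5 : ⟪u8,u5⟫ = 0 := orthAdj _ _ u8 u5 hus8 hus5 ((hadjiff 8 5 (by decide) (by decide)).mpr (by decide))
  have Z_8_6 : ⟪u8,u6⟫ = 0 := orthAdj _ _ u8 u6 hus8 hus6 ((hadjiff 8 6 (by decide) (by decide)).mpr (by decide))
  have Z_8_7 : ⟪u8,u7⟫ = 0 := orthAdj _ _ u8 u7 hus8 hus7 ((hadjiff 8 7 (by decide) (by decide)).mpr (by decide))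
  have Z_8_9 : ⟪u8,u9⟫ = 0 := orthAdj _ _ u8 u9 hus8 hus9 ((hadjiff 8 9 (by decide) (by decide)).mpr (by decide))
  have Z_8_10 : ⟪u8,u10⟫ = 0 := orthAdj _ _ u8 u10 hus8 hus10 ((hadjiff 8 10 (by decide) (by decide)).mpr (by decide))
  have Z_9_1 : ⟪u9,u1⟫ = 0 := orthAdj _ _ u9 u1 hus9 hus1 ((hadjiff 9 1 (by decide) (by decide)).mpr (by decide))
  have Z_9_6 : ⟪u9,u6⟫ = 0 := orthAdj _ _ u9 u6 hus9 hus6 ((hadjiff 9 6 (by decide) (by decide)).mpr (by decide))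
  have Z_9_7 : ⟪u9,u7⟫ = 0 := orthAdj _ _ u9 u7 hus9 hus7 ((hadjiff 9 7 (by decide) (by decide)).mpr (by decide))
  have Z_9_8 : ⟪u9,u8⟫ = 0 := orthAdj _ _ u9 u8 hus9 hus8 ((hadjiff 9 8 (by decide) (by decide)).mpr (by decide))
  have Z_9_10 : ⟪u9,u10⟫ = 0 := orthAdj _ _ u9 u10 hus9 hus10 ((hadjiff 9 10 (by decide) (by decide)).mpr (by decide))
  have Z_10_1 : ⟪u10,u1⟫ = 0 := orthAdj _ _ u10 u1 hus10 hus1 ((hadjiff 10 1 (by decide) (by decide)).mpr (by decide))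
  have Z_10_2 : ⟪u10,u2⟫ = 0 := orthAdj _ _ u10 u2 hus10 hus2 ((hadjiff 10 2 (by decide) (by decide)).mpr (by decide))
  have Z_10_7 : ⟪u10,u7⟫ = 0 := orthAdj _ _ u10 u7 hus10 hus7 ((hadjiff 10 7 (by decide) (by decide)).mpr (by decide))
  have Z_10_8 : ⟪u10,u8⟫ = 0 := orthAdj _ _ u10 u8 hus10 hus8 ((hadjiff 10 8 (by decide) (by decide)).mpr (by decide))
  have Z_10_9 : ⟪u10,u9⟫ = 0 := orthAdj _ _ u10 u9 hus10 hus9 ((hadjiff 10 9 (by decide) (by decide)).mpr (by decide))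
  have hvne2_6 : (⟨v + 2, hmem 2 (by decide)⟩ : {i : ZMod 11 | i ≠ v}) ≠ ⟨v + 6, hmem 6 (by decide)⟩ := by
    intro h
    exact (by decide : (2:ZMod 11) ≠ 6) (add_left_cancel (Subtype.ext_iff.mp h))
  have hN2_6 : ⟪u2,u6⟫ ≠ 0 := orthNon _ _ u2 u6 hus2 hus6 hvne2_6
    (fun h => absurd ((hadjiff 2 6 (by decide) (by decide)).mp h) (by decide))
  have hvne3_7 : (⟨v + 3, hmem 3 (by decide)⟩ : {i : ZMod 11 | i ≠ v}) ≠ ⟨v + 7, hmem 7 (by decide)⟩ := by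
    intro h
    exact (by decide : (3:ZMod 11) ≠ 7) (add_left_cancel (Subtype.ext_iff.mp h))
  have hN3_7 : ⟪u3,u7⟫ ≠ 0 := orthNon _ _ u3 u7 hus3 hus7 hvne3_7
    (fun h => absurd ((hadjiff 3 7 (by decide) (by decide)).mp h) (by decide))
  have hvne4_8 : (⟨v + 4, hmem 4 (by decide)⟩ : {i : ZMod 11 | i ≠ v}) ≠ ⟨v + 8, hmem 8 (by decide)⟩ := by
    intro h
    exact (by decide : (4:ZMod 11) ≠ 8) (add_left_cancel (Subtype.ext_iff.mp h))
  have hN4_8 : ⟪u4,u8⟫ ≠ 0 := orthNon _ _ u4 u8 hus4 hus8 hvne4_8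
    (fun h => absurd ((hadjiff 4 8 (by decide) (by decide)).mp h) (by decide))
  have hvne5_9 : (⟨v + 5, hmem 5 (by decide)⟩ : {i : ZMod 11 | i ≠ v}) ≠ ⟨v + 9, hmem 9 (by decide)⟩ := by
    intro h
    exact (by decide : (5:ZMod 11) ≠ 9) (add_left_cancel (Subtype.ext_iff.mp h))
  have hN5_9 : ⟪u5,u9⟫ ≠ 0 := orthNon _ _ u5 u9 hus5 hus9 hvne5_9
    (fun h => absurd ((hadjiff 5 9 (by decide) (by decide)).mp h) (by decide))
  have hvne5_10 : (⟨v + 5, hmem 5 (by decide)⟩ : {i : ZMod 11 | i ≠ v}) ≠ ⟨v + 10, hmem 10 (by decide)⟩ := by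
    intro h
    exact (by decide : (5:ZMod 11) ≠ 10) (add_left_cancel (Subtype.ext_iff.mp h))
  have hN5_10 : ⟪u5,u10⟫ ≠ 0 := orthNon _ _ u5 u10 hus5 hus10 hvne5_10
    (fun h => absurd ((hadjiff 5 10 (by decide) (by decide)).mp h) (by decide))
  obtain ⟨z, hzn, parseval⟩ := exists_parseval u1 u2 u3 u4 hun1 hun2 hun3 hun4
    Z_1_2 Z_1_3 Z_1_4 Z_2_1 Z_2_3 Z_2_4 Z_3_1 Z_3_2 Z_3_4 Z_4_1 Z_4_2 Z_4_3
  have E56 : (starRingEnd ℂ) ⟪u1,u5⟫ * ⟪u1,u6⟫ + (starRingEnd ℂ) ⟪z,u5⟫ * ⟪z,u6⟫ = 0 := by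
    have hp := parseval u5 u6
    rw [Z_5_6] at hp
    rw [Z_5_2, Z_5_3, Z_5_4] at hp
    rw [← inner_conj_symm u5 u1, ← inner_conj_symm u5 z] at hp
    linear_combination -hp
  have E56c : ⟪u1,u5⟫ * (starRingEnd ℂ) ⟪u1,u6⟫ + ⟪z,u5⟫ * (starRingEnd ℂ) ⟪z,u6⟫ = 0 := by
    have hp := parseval u6 u5
    rw [Z_6_5] at hp
    rw [Z_6_3, Z_6_4, Z_2_5] at hp
    rw [← inner_conj_symm u6 u1, ← inner_conj_symm u6 u2, ← inner_conj_symm u6 z] at hp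
    linear_combination -hp
  have E57 : (starRingEnd ℂ) ⟪u1,u5⟫ * ⟪u1,u7⟫ + (starRingEnd ℂ) ⟪z,u5⟫ * ⟪z,u7⟫ = 0 := by
    have hp := parseval u5 u7
    rw [Z_5_7] at hp
    rw [Z_5_2, Z_5_3, Z_5_4] at hp
    rw [← inner_conj_symm u5 u1, ← inner_conj_symm u5 z] at hp
    linear_combination -hp
  have E57c : ⟪u1,u5⟫ * (starRingEnd ℂ) ⟪u1,u7⟫ + ⟪z,u5⟫ * (starRingEnd ℂ) ⟪z,u7⟫ = 0 := by
    have hp := parseval u7 u5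
    rw [Z_7_5] at hp
    rw [Z_7_4, Z_2_5, Z_3_5] at hp
    rw [← inner_conj_symm u7 u1, ← inner_conj_symm u7 u2, ← inner_conj_symm u7 u3, ← inner_conj_symm u7 z] at hp
    linear_combination -hp
  have E58 : (starRingEnd ℂ) ⟪u1,u5⟫ * ⟪u1,u8⟫ + (starRingEnd ℂ) ⟪z,u5⟫ * ⟪z,u8⟫ = 0 := by
    have hp := parseval u5 u8
    rw [Z_5_8] at hp
    rw [Z_5_2, Z_5_3, Z_5_4] at hp
    rw [← inner_conj_symm u5 u1, ← inner_conj_symm u5 z] at hp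
    linear_combination -hp
  have E58c : ⟪u1,u5⟫ * (starRingEnd ℂ) ⟪u1,u8⟫ + ⟪z,u5⟫ * (starRingEnd ℂ) ⟪z,u8⟫ = 0 := by
    have hp := parseval u8 u5
    rw [Z_8_5] at hp
    rw [Z_2_5, Z_3_5, Z_4_5] at hp
    rw [← inner_conj_symm u8 u1, ← inner_conj_symm u8 u2, ← inner_conj_symm u8 u3, ← inner_conj_symm u8 u4, ← inner_conj_symm u8 z] at hp
    linear_combination -hp
  have E67 : (starRingEnd ℂ) ⟪u1,u6⟫ * ⟪u1,u7⟫ + (starRingEnd ℂ) ⟪u2,u6⟫ * ⟪u2,u7⟫ + (starRingEnd ℂ) ⟪z,u6⟫ * ⟪z,u7⟫ = 0 := by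
    have hp := parseval u6 u7
    rw [Z_6_7] at hp
    rw [Z_6_3, Z_6_4] at hp
    rw [← inner_conj_symm u6 u1, ← inner_conj_symm u6 u2, ← inner_conj_symm u6 z] at hp
    linear_combination -hp
  have E67c : ⟪u1,u6⟫ * (starRingEnd ℂ) ⟪u1,u7⟫ + ⟪u2,u6⟫ * (starRingEnd ℂ) ⟪u2,u7⟫ + ⟪z,u6⟫ * (starRingEnd ℂ) ⟪z,u7⟫ = 0 := by
    have hp := parseval u7 u6
    rw [Z_7_6] at hp
    rw [Z_7_4, Z_3_6] at hp
    rw [← inner_conj_symm u7 u1, ← inner_conj_symm u7 u2, ← inner_conj_symm u7 u3, ← inner_conj_symm u7 z] at hp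
    linear_combination -hp
  have E68 : (starRingEnd ℂ) ⟪u1,u6⟫ * ⟪u1,u8⟫ + (starRingEnd ℂ) ⟪u2,u6⟫ * ⟪u2,u8⟫ + (starRingEnd ℂ) ⟪z,u6⟫ * ⟪z,u8⟫ = 0 := by
    have hp := parseval u6 u8
    rw [Z_6_8] at hp
    rw [Z_6_3, Z_6_4] at hp
    rw [← inner_conj_symm u6 u1, ← inner_conj_symm u6 u2, ← inner_conj_symm u6 z] at hp
    linear_combination -hp
  have E68c : ⟪u1,u6⟫ * (starRingEnd ℂ) ⟪u1,u8⟫ + ⟪u2,u6⟫ * (starRingEnd ℂ) ⟪u2,u8⟫ + ⟪z,u6⟫ * (starRingEnd ℂ) ⟪z,u8⟫ = 0 := by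
    have hp := parseval u8 u6
    rw [Z_8_6] at hp
    rw [Z_3_6, Z_4_6] at hp
    rw [← inner_conj_symm u8 u1, ← inner_conj_symm u8 u2, ← inner_conj_symm u8 u3, ← inner_conj_symm u8 u4, ← inner_conj_symm u8 z] at hp
    linear_combination -hp
  have E69 : (starRingEnd ℂ) ⟪u2,u6⟫ * ⟪u2,u9⟫ + (starRingEnd ℂ) ⟪z,u6⟫ * ⟪z,u9⟫ = 0 := by
    have hp := parseval u6 u9
    rw [Z_6_9] at hp
    rw [Z_6_3, Z_6_4, Z_1_9] at hp
    rw [← inner_conj_symm u6 u1, ← inner_conj_symm u6 u2, ← inner_conj_symm u6 z] at hp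
    linear_combination -hp
  have E69c : ⟪u2,u6⟫ * (starRingEnd ℂ) ⟪u2,u9⟫ + ⟪z,u6⟫ * (starRingEnd ℂ) ⟪z,u9⟫ = 0 := by
    have hp := parseval u9 u6
    rw [Z_9_6] at hp
    rw [Z_9_1, Z_3_6, Z_4_6] at hp
    rw [← inner_conj_symm u9 u2, ← inner_conj_symm u9 u3, ← inner_conj_symm u9 u4, ← inner_conj_symm u9 z] at hp
    linear_combination -hp
  have E78 : (starRingEnd ℂ) ⟪u1,u7⟫ * ⟪u1,u8⟫ + (starRingEnd ℂ) ⟪u2,u7⟫ * ⟪u2,u8⟫ + (starRingEnd ℂ) ⟪u3,u7⟫ * ⟪u3,u8⟫ + (starRingEnd ℂ) ⟪z,u7⟫ * ⟪z,u8⟫ = 0 := by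
    have hp := parseval u7 u8
    rw [Z_7_8] at hp
    rw [Z_7_4] at hp
    rw [← inner_conj_symm u7 u1, ← inner_conj_symm u7 u2, ← inner_conj_symm u7 u3, ← inner_conj_symm u7 z] at hp
    linear_combination -hp
  have E78c : ⟪u1,u7⟫ * (starRingEnd ℂ) ⟪u1,u8⟫ + ⟪u2,u7⟫ * (starRingEnd ℂ) ⟪u2,u8⟫ + ⟪u3,u7⟫ * (starRingEnd ℂ) ⟪u3,u8⟫ + ⟪z,u7⟫ * (starRingEnd ℂ) ⟪z,u8⟫ = 0 := by
    have hp := parseval u8 u7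
    rw [Z_8_7] at hp
    rw [Z_4_7] at hp
    rw [← inner_conj_symm u8 u1, ← inner_conj_symm u8 u2, ← inner_conj_symm u8 u3, ← inner_conj_symm u8 u4, ← inner_conj_symm u8 z] at hp
    linear_combination -hp
  have E79 : (starRingEnd ℂ) ⟪u2,u7⟫ * ⟪u2,u9⟫ + (starRingEnd ℂ) ⟪u3,u7⟫ * ⟪u3,u9⟫ + (starRingEnd ℂ) ⟪z,u7⟫ * ⟪z,u9⟫ = 0 := by
    have hp := parseval u7 u9
    rw [Z_7_9] at hp
    rw [Z_7_4, Z_1_9] at hp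
    rw [← inner_conj_symm u7 u1, ← inner_conj_symm u7 u2, ← inner_conj_symm u7 u3, ← inner_conj_symm u7 z] at hp
    linear_combination -hp
  have E79c : ⟪u2,u7⟫ * (starRingEnd ℂ) ⟪u2,u9⟫ + ⟪u3,u7⟫ * (starRingEnd ℂ) ⟪u3,u9⟫ + ⟪z,u7⟫ * (starRingEnd ℂ) ⟪z,u9⟫ = 0 := by
    have hp := parseval u9 u7
    rw [Z_9_7] at hp
    rw [Z_9_1, Z_4_7] at hp
    rw [← inner_conj_symm u9 u2, ← inner_conj_symm u9 u3, ← inner_conj_symm u9 u4, ← inner_conj_symm u9 z] at hp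
    linear_combination -hp
  have E710 : (starRingEnd ℂ) ⟪u3,u7⟫ * ⟪u3,u10⟫ + (starRingEnd ℂ) ⟪z,u7⟫ * ⟪z,u10⟫ = 0 := by
    have hp := parseval u7 u10
    rw [Z_7_10] at hp
    rw [Z_7_4, Z_1_10, Z_2_10] at hp
    rw [← inner_conj_symm u7 u1, ← inner_conj_symm u7 u2, ← inner_conj_symm u7 u3, ← inner_conj_symm u7 z] at hp
    linear_combination -hp
  have E89 : (starRingEnd ℂ) ⟪u2,u8⟫ * ⟪u2,u9⟫ + (starRingEnd ℂ) ⟪u3,u8⟫ * ⟪u3,u9⟫ + (starRingEnd ℂ) ⟪u4,u8⟫ * ⟪u4,u9⟫ + (starRingEnd ℂ) ⟪z,u8⟫ * ⟪z,u9⟫ = 0 := by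
    have hp := parseval u8 u9
    rw [Z_8_9] at hp
    rw [Z_1_9] at hp
    rw [← inner_conj_symm u8 u1, ← inner_conj_symm u8 u2, ← inner_conj_symm u8 u3, ← inner_conj_symm u8 u4, ← inner_conj_symm u8 z] at hp
    linear_combination -hp
  have E89c : ⟪u2,u8⟫ * (starRingEnd ℂ) ⟪u2,u9⟫ + ⟪u3,u8⟫ * (starRingEnd ℂ) ⟪u3,u9⟫ + ⟪u4,u8⟫ * (starRingEnd ℂ) ⟪u4,u9⟫ + ⟪z,u8⟫ * (starRingEnd ℂ) ⟪z,u9⟫ = 0 := by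
    have hp := parseval u9 u8
    rw [Z_9_8] at hp
    rw [Z_9_1] at hp
    rw [← inner_conj_symm u9 u2, ← inner_conj_symm u9 u3, ← inner_conj_symm u9 u4, ← inner_conj_symm u9 z] at hp
    linear_combination -hp
  have E810 : (starRingEnd ℂ) ⟪u3,u8⟫ * ⟪u3,u10⟫ + (starRingEnd ℂ) ⟪u4,u8⟫ * ⟪u4,u10⟫ + (starRingEnd ℂ) ⟪z,u8⟫ * ⟪z,u10⟫ = 0 := by
    have hp := parseval u8 u10
    rw [Z_8_10] at hp
    rw [Z_1_10, Z_2_10] at hp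
    rw [← inner_conj_symm u8 u1, ← inner_conj_symm u8 u2, ← inner_conj_symm u8 u3, ← inner_conj_symm u8 u4, ← inner_conj_symm u8 z] at hp
    linear_combination -hp
  have E910 : (starRingEnd ℂ) ⟪u3,u9⟫ * ⟪u3,u10⟫ + (starRingEnd ℂ) ⟪u4,u9⟫ * ⟪u4,u10⟫ + (starRingEnd ℂ) ⟪z,u9⟫ * ⟪z,u10⟫ = 0 := by
    have hp := parseval u9 u10
    rw [Z_9_10] at hp
    rw [Z_9_1, Z_2_10] at hp
    rw [← inner_conj_symm u9 u2, ← inner_conj_symm u9 u3, ← inner_conj_symm u9 u4, ← inner_conj_symm u9 z] at hp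
    linear_combination -hp
  have hbf : (starRingEnd ℂ) ⟪z,u5⟫ * ⟪z,u9⟫ ≠ 0 := by
    have hp := parseval u5 u9
    rw [Z_5_2, Z_5_3, Z_5_4, Z_1_9] at hp
    rw [← inner_conj_symm u5 u1, ← inner_conj_symm u5 z] at hp
    intro h
    apply hN5_9
    rw [hp]
    linear_combination h
  have hbg : (starRingEnd ℂ) ⟪z,u5⟫ * ⟪z,u10⟫ ≠ 0 := by
    have hp := parseval u5 u10
    rw [Z_5_2, Z_5_3, Z_5_4, Z_1_10] at hp
    rw [← inner_conj_symm u5 u1, ← inner_conj_symm u5 z] at hp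
    intro h
    apply hN5_10
    rw [hp]
    linear_combination h
  have hb : ⟪z,u5⟫ ≠ 0 := fun h => hbf (by rw [h]; simp)
  have hf : ⟪z,u9⟫ ≠ 0 := fun h => hbf (by rw [h]; simp)
  have hg : ⟪z,u10⟫ ≠ 0 := fun h => hbg (by rw [h]; simp)
  exact keylemma ⟪u1,u5⟫ ⟪z,u5⟫ ⟪u1,u6⟫ ⟪u2,u6⟫ ⟪z,u6⟫ ⟪u1,u7⟫ ⟪u2,u7⟫ ⟪u3,u7⟫ ⟪z,u7⟫
    ⟪u1,u8⟫ ⟪u2,u8⟫ ⟪u3,u8⟫ ⟪u4,u8⟫ ⟪z,u8⟫ ⟪u2,u9⟫ ⟪u3,u9⟫ ⟪u4,u9⟫ ⟪z,u9⟫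
    ⟪u3,u10⟫ ⟪u4,u10⟫ ⟪z,u10⟫ hb hN2_6 hN3_7 hN4_8 hf hg
    E56 E56c E57 E57c E58 E58c E67 E67c E68 E68c E69 E69c E78 E78c E79 E79c E710 E89 E89c E810 E910

end
end

section
/- The circulant graph Ci₈(1,2), on 8 vertices with each vertex adjacent to its first and second neighbors in both directions, satisfies Ξ(Ci₈(1,2)) = 5: it admits a faithful orthogonal representation in ℂ⁵ but none in ℂ⁴. -/
open Module

open scoped ComplexInnerProductSpace

lemma span_ortho_iff {d : ℕ} (a c : EuclideanSpace ℂ (Fin d)) :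
    (ℂ ∙ a) ≤ (ℂ ∙ c)ᗮ ↔ ⟪a, c⟫ = 0 := by
  rw [Submodule.span_singleton_le_iff_mem, Submodule.mem_orthogonal_singleton_iff_inner_right,
    inner_eq_zero_symm]

lemma hasFOR_iff {V : Type*} (G : SimpleGraph V) (d : ℕ) :
    HasFOR G d ↔ ∃ x : V → EuclideanSpace ℂ (Fin d),
      (∀ v, x v ≠ 0) ∧
      (∀ u v : V, u ≠ v → (ℂ ∙ (x u)) ≠ (ℂ ∙ (x v))) ∧
      (∀ u v : V, u ≠ v → (G.Adj u v ↔ ⟪x u, x v⟫ = 0)) := by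
  constructor
  · rintro ⟨φ, hinj, hrk, hiff⟩
    have hbot : ∀ v, φ v ≠ ⊥ := by
      intro v h
      have h2 := hrk v
      rw [h] at h2
      simp at h2
    choose x hx hx0 using fun v => Submodule.exists_mem_ne_zero_of_ne_bot (hbot v)
    have hspan : ∀ v, φ v = ℂ ∙ x v := by
      intro v
      refine (Submodule.eq_of_le_of_finrank_le
        ((Submodule.span_singleton_le_iff_mem _ _).2 (hx v)) ?_).symm
      rw [hrk v, finrank_span_singleton (hx0 v)]
    refine ⟨x, hx0, fun u v huv he => huv (hinj (by rw [hspan u, hspan v, he])),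
      fun u v huv => by rw [hiff u v huv, hspan u, hspan v, span_ortho_iff]⟩
  · rintro ⟨x, hx0, hsp, hadj⟩
    refine ⟨fun v => ℂ ∙ x v, fun u v h => by_contra fun hne => hsp u v hne h,
      fun v => finrank_span_singleton (hx0 v),
      fun u v huv => by rw [hadj u v huv, span_ortho_iff]⟩
open scoped ComplexInnerProductSpace
open Finset

lemma embed_exists {d e : ℕ} (hde : d ≤ e) :
    ∃ f : EuclideanSpace ℂ (Fin d) → EuclideanSpace ℂ (Fin e),
      Function.Injective f ∧ (∀ (c : ℂ) y, f (c • y) = c • f y) ∧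
      (∀ y z, ⟪f y, f z⟫ = ⟪y, z⟫) := by
  let f : EuclideanSpace ℂ (Fin d) → EuclideanSpace ℂ (Fin e) :=
    fun y => WithLp.toLp 2 (fun k => if h : (k : ℕ) < d then y ⟨k, h⟩ else 0)
  refine ⟨f, ?_, ?_, ?_⟩
  · intro y z h
    ext j
    have h2 := congrArg (fun w : EuclideanSpace ℂ (Fin e) => w ⟨j, lt_of_lt_of_le j.2 hde⟩) h
    simpa [f] using h2
  · intro c y
    ext k
    by_cases h : (k : ℕ) < d <;> simp [f, h]
  · intro y z
    let F : ℕ → ℂ := fun i => if h : i < d then (starRingEnd ℂ) (y ⟨i, h⟩) * z ⟨i, h⟩ else 0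
    calc ⟪f y, f z⟫ = ∑ k : Fin e, ⟪f y k, f z k⟫ := PiLp.inner_apply _ _
      _ = ∑ k : Fin e, F (k : ℕ) := by
          refine Finset.sum_congr rfl fun k _ => ?_
          by_cases h : (k : ℕ) < d <;> simp [f, F, h, RCLike.inner_apply, mul_comm]
      _ = ∑ i ∈ Finset.range e, F i := Fin.sum_univ_eq_sum_range F e
      _ = ∑ i ∈ Finset.range d, F i := by
          refine (Finset.sum_subset (Finset.range_subset_range.2 hde) fun i _ hi => ?_).symm
          rw [Finset.mem_range, not_lt] at hi
          simp [F, Nat.not_lt.2 hi]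
      _ = ∑ k : Fin d, F (k : ℕ) := (Fin.sum_univ_eq_sum_range F d).symm
      _ = ∑ k : Fin d, ⟪y k, z k⟫ := by
          refine Finset.sum_congr rfl fun k _ => ?_
          simp [F, k.2, RCLike.inner_apply, mul_comm]
      _ = ⟪y, z⟫ := (PiLp.inner_apply _ _).symm
open scoped ComplexInnerProductSpace
open Finset

lemma adj8 (u v : ZMod 8) :
    (SimpleGraph.circulantGraph ({1, 2} : Set (ZMod 8))).Adj u v ↔
      (u ≠ v ∧ ((u - v = 1 ∨ u - v = 2) ∨ (v - u = 1 ∨ v - u = 2))) := by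
  simp [SimpleGraph.circulantGraph_adj, Set.mem_insert_iff, Set.mem_singleton_iff]

def mUB : Fin 8 → Fin 5 → ℤ :=
  ![![1,0,0,0,0], ![0,0,0,0,1], ![0,0,0,1,0], ![1,-2,-1,0,0],
    ![1,0,1,0,-2], ![2,1,0,-1,1], ![0,0,2,1,1], ![0,2,-1,2,0]]

def idx8 (v : ZMod 8) : Fin 8 := ⟨v.val, ZMod.val_lt v⟩

def gUB (u v : ZMod 8) : ℤ := ∑ k : Fin 5, mUB (idx8 u) k * mUB (idx8 v) k

def xUB : ZMod 8 → EuclideanSpace ℂ (Fin 5) := fun v => WithLp.toLp 2 (fun k => ((mUB (idx8 v) k : ℤ) : ℂ))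

lemma xUB_inner (u v : ZMod 8) : ⟪xUB u, xUB v⟫ = (gUB u v : ℂ) := by
  rw [PiLp.inner_apply]
  simp only [xUB, gUB, RCLike.inner_apply, map_intCast, PiLp.toLp_apply]
  push_cast
  exact Finset.sum_congr rfl fun k _ => by ring

example : ∀ v : ZMod 8, gUB v v ≠ 0 := by decide
example : ∀ u v : ZMod 8, u ≠ v → ∃ w : ZMod 8, gUB w u = 0 ∧ gUB w v ≠ 0 := by decide
example : ∀ u v : ZMod 8, u ≠ v →
    (((u - v = 1 ∨ u - v = 2) ∨ (v - u = 1 ∨ v - u = 2)) ↔ gUB u v = 0) := by decide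

lemma hasFOR5 : HasFOR (SimpleGraph.circulantGraph ({1, 2} : Set (ZMod 8))) 5 := by
  rw [hasFOR_iff]
  have hdiag : ∀ v : ZMod 8, gUB v v ≠ 0 := by decide
  refine ⟨xUB, ?_, ?_, ?_⟩
  · intro v h
    have h2 : (gUB v v : ℂ) = 0 := by rw [← xUB_inner, h, inner_zero_left]
    exact hdiag v (by exact_mod_cast h2)
  · intro u v huv he
    obtain ⟨w, hw1, hw2⟩ :=
      (show ∀ u v : ZMod 8, u ≠ v → ∃ w : ZMod 8, gUB w u = 0 ∧ gUB w v ≠ 0 by decide) u v huv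
    have h1 : xUB u ∈ ℂ ∙ xUB v := he ▸ Submodule.mem_span_singleton_self _
    obtain ⟨c, hc⟩ := Submodule.mem_span_singleton.1 h1
    have hzu : ⟪xUB w, xUB u⟫ = 0 := by rw [xUB_inner]; exact_mod_cast hw1
    have hzv : ⟪xUB w, xUB v⟫ ≠ 0 := by
      rw [xUB_inner]
      exact_mod_cast hw2
    rw [← hc, inner_smul_right] at hzu
    rcases mul_eq_zero.1 hzu with h | h
    · apply hdiag u
      have : xUB u = 0 := by rw [← hc, h, zero_smul]
      have h2 : (gUB u u : ℂ) = 0 := by rw [← xUB_inner, this, inner_zero_left]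
      exact_mod_cast h2
    · exact hzv h
  · intro u v huv
    have key : ∀ u v : ZMod 8, u ≠ v →
        (((u - v = 1 ∨ u - v = 2) ∨ (v - u = 1 ∨ v - u = 2)) ↔ gUB u v = 0) := by decide
    rw [adj8, xUB_inner]
    constructor
    · intro h
      exact_mod_cast (key u v huv).1 h.2
    · intro h
      exact ⟨huv, (key u v huv).2 (by exact_mod_cast h)⟩

lemma noFOR4 : ¬ HasFOR (SimpleGraph.circulantGraph ({1, 2} : Set (ZMod 8))) 4 := by
  rw [hasFOR_iff]
  rintro ⟨x, hx0, -, hadj⟩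
  -- adjacency helpers
  have hortho : ∀ u v : ZMod 8, ((u - v = 1 ∨ u - v = 2) ∨ (v - u = 1 ∨ v - u = 2)) →
      ⟪x u, x v⟫ = 0 := by
    intro u v h
    have hne : u ≠ v := by
      rintro rfl
      rw [sub_self] at h
      revert h; decide
    exact (hadj u v hne).1 ((adj8 u v).2 ⟨hne, h⟩)
  have hnon : ∀ u v : ZMod 8, (u - v = 3 ∨ u - v = 4 ∨ u - v = 5) → ⟪x u, x v⟫ ≠ 0 := by
    intro u v h
    have hne : u ≠ v := by
      rintro rfl
      rw [sub_self] at h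
      revert h; decide
    intro h0
    have h2 := (adj8 u v).1 ((hadj u v hne).2 h0)
    exact (show ∀ u v : ZMod 8, (u - v = 3 ∨ u - v = 4 ∨ u - v = 5) →
      ¬((u - v = 1 ∨ u - v = 2) ∨ (v - u = 1 ∨ v - u = 2)) by decide) u v h h2.2
  -- orthonormal triple and basis extension
  let v4 : Fin 4 → EuclideanSpace ℂ (Fin 4) := fun i =>
    if i = 0 then (‖x 0‖ : ℂ)⁻¹ • x 0 else if i = 1 then (‖x 1‖ : ℂ)⁻¹ • x 1
      else if i = 2 then (‖x 2‖ : ℂ)⁻¹ • x 2 else 0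
  have o01 : ⟪x 0, x 1⟫ = 0 := hortho 0 1 (by decide)
  have o10 : ⟪x 1, x 0⟫ = 0 := hortho 1 0 (by decide)
  have o02 : ⟪x 0, x 2⟫ = 0 := hortho 0 2 (by decide)
  have o20 : ⟪x 2, x 0⟫ = 0 := hortho 2 0 (by decide)
  have o12 : ⟪x 1, x 2⟫ = 0 := hortho 1 2 (by decide)
  have o21 : ⟪x 2, x 1⟫ = 0 := hortho 2 1 (by decide)
  have hunit : ∀ v : ZMod 8, ‖(‖x v‖ : ℂ)⁻¹ • x v‖ = 1 := by
    intro v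
    have h : ‖x v‖ ≠ 0 := norm_ne_zero_iff.2 (hx0 v)
    rw [norm_smul, norm_inv]
    simp only [Complex.norm_real, Real.norm_eq_abs, abs_of_nonneg (norm_nonneg (x v))]
    exact inv_mul_cancel₀ h
  have hON : Orthonormal ℂ (({0, 1, 2} : Set (Fin 4)).restrict v4) := by
    constructor
    · rintro ⟨i, hi⟩
      simp only [Set.mem_insert_iff, Set.mem_singleton_iff] at hi
      rcases hi with rfl | rfl | rfl <;>
        · simp only [Set.restrict_apply, v4, reduceIte]
          exact hunit _
    · rintro ⟨i, hi⟩ ⟨j, hj⟩ hij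
      simp only [Set.mem_insert_iff, Set.mem_singleton_iff] at hi hj
      rcases hi with rfl | rfl | rfl <;> rcases hj with rfl | rfl | rfl <;>
        first
        | exact absurd rfl hij
        | simp [Set.restrict, v4, inner_smul_left, inner_smul_right, o01, o10, o02, o20, o12, o21]
  obtain ⟨b, hb⟩ := hON.exists_orthonormalBasis_extension_of_card_eq (by simp)
  have hb0 : b 0 = (‖x 0‖ : ℂ)⁻¹ • x 0 := by
    have h := hb 0 (by simp)
    simpa [v4] using h
  have hb1 : b 1 = (‖x 1‖ : ℂ)⁻¹ • x 1 := by
    have h := hb 1 (by simp)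
    simpa [v4] using h
  have hb2 : b 2 = (‖x 2‖ : ℂ)⁻¹ • x 2 := by
    have h := hb 2 (by simp)
    simpa [v4] using h
  -- Parseval
  have hpar : ∀ y z : EuclideanSpace ℂ (Fin 4),
      ⟪y, z⟫ = ∑ k : Fin 4, (starRingEnd ℂ) ⟪b k, y⟫ * ⟪b k, z⟫ := by
    intro y z
    rw [← LinearIsometryEquiv.inner_map_map b.repr y z, PiLp.inner_apply]
    exact Finset.sum_congr rfl fun k _ => by
      rw [RCLike.inner_apply, b.repr_apply_apply, b.repr_apply_apply, mul_comm]
  -- coordinate transfer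
  have hcz : ∀ (k : Fin 4) (i j : ZMod 8), b k = (‖x i‖ : ℂ)⁻¹ • x i →
      ⟪x i, x j⟫ = 0 → ⟪b k, x j⟫ = 0 := by
    intro k i j hbk hz
    rw [hbk, inner_smul_left, hz, mul_zero]
  have hcnz : ∀ (k : Fin 4) (i j : ZMod 8), b k = (‖x i‖ : ℂ)⁻¹ • x i →
      ⟪x i, x j⟫ ≠ 0 → ⟪b k, x j⟫ ≠ 0 := by
    intro k i j hbk hz
    rw [hbk, inner_smul_left]
    refine mul_ne_zero ?_ hz
    have hni : ((‖x i‖ : ℂ))⁻¹ ≠ 0 :=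
      inv_ne_zero (by simpa [Complex.ofReal_ne_zero, norm_ne_zero_iff] using hx0 i)
    intro h
    apply hni
    have := congrArg (starRingEnd ℂ) h
    simpa using this
  -- zero coordinates
  have z31 : ⟪b 1, x 3⟫ = 0 := hcz 1 1 3 hb1 (hortho 1 3 (by decide))
  have z32 : ⟪b 2, x 3⟫ = 0 := hcz 2 2 3 hb2 (hortho 2 3 (by decide))
  have z42 : ⟪b 2, x 4⟫ = 0 := hcz 2 2 4 hb2 (hortho 2 4 (by decide))
  have z60 : ⟪b 0, x 6⟫ = 0 := hcz 0 0 6 hb0 (hortho 0 6 (by decide))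
  have z70 : ⟪b 0, x 7⟫ = 0 := hcz 0 0 7 hb0 (hortho 0 7 (by decide))
  have z71 : ⟪b 1, x 7⟫ = 0 := hcz 1 1 7 hb1 (hortho 1 7 (by decide))
  -- nonzero coordinates
  have n41 : ⟪b 1, x 4⟫ ≠ 0 := hcnz 1 1 4 hb1 (hnon 1 4 (by decide))
  have n52 : ⟪b 2, x 5⟫ ≠ 0 := hcnz 2 2 5 hb2 (hnon 2 5 (by decide))
  have n62 : ⟪b 2, x 6⟫ ≠ 0 := hcnz 2 2 6 hb2 (hnon 2 6 (by decide))
  have h37 : (starRingEnd ℂ) ⟪b 3, x 3⟫ * ⟪b 3, x 7⟫ ≠ 0 := by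
    have h := hnon 3 7 (by decide)
    rw [hpar (x 3) (x 7), Fin.sum_univ_four, z70, z31, z32] at h
    simpa only [map_zero, zero_mul, mul_zero, add_zero, zero_add] using h
  have n33 : ⟪b 3, x 3⟫ ≠ 0 := fun h => h37 (by rw [h, map_zero, zero_mul])
  have n73 : ⟪b 3, x 7⟫ ≠ 0 := fun h => h37 (by rw [h, mul_zero])
  -- equations
  have e34 : (starRingEnd ℂ) ⟪b 0, x 3⟫ * ⟪b 0, x 4⟫
      + (starRingEnd ℂ) ⟪b 3, x 3⟫ * ⟪b 3, x 4⟫ = 0 := by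
    have h := hortho 3 4 (by decide)
    rw [hpar (x 3) (x 4), Fin.sum_univ_four, z31, z32] at h
    simpa only [map_zero, zero_mul, mul_zero, add_zero, zero_add] using h
  have e35 : (starRingEnd ℂ) ⟪b 0, x 3⟫ * ⟪b 0, x 5⟫
      + (starRingEnd ℂ) ⟪b 3, x 3⟫ * ⟪b 3, x 5⟫ = 0 := by
    have h := hortho 3 5 (by decide)
    rw [hpar (x 3) (x 5), Fin.sum_univ_four, z31, z32] at h
    simpa only [map_zero, zero_mul, mul_zero, add_zero, zero_add] using h
  have e45 : (starRingEnd ℂ) ⟪b 0, x 4⟫ * ⟪b 0, x 5⟫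
      + (starRingEnd ℂ) ⟪b 1, x 4⟫ * ⟪b 1, x 5⟫
      + (starRingEnd ℂ) ⟪b 3, x 4⟫ * ⟪b 3, x 5⟫ = 0 := by
    have h := hortho 4 5 (by decide)
    rw [hpar (x 4) (x 5), Fin.sum_univ_four, z42] at h
    simpa only [map_zero, zero_mul, mul_zero, add_zero, zero_add] using h
  have e46 : (starRingEnd ℂ) ⟪b 1, x 4⟫ * ⟪b 1, x 6⟫
      + (starRingEnd ℂ) ⟪b 3, x 4⟫ * ⟪b 3, x 6⟫ = 0 := by
    have h := hortho 4 6 (by decide)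
    rw [hpar (x 4) (x 6), Fin.sum_univ_four, z60, z42] at h
    simpa only [map_zero, zero_mul, mul_zero, add_zero, zero_add] using h
  have e56 : (starRingEnd ℂ) ⟪b 1, x 5⟫ * ⟪b 1, x 6⟫
      + (starRingEnd ℂ) ⟪b 2, x 5⟫ * ⟪b 2, x 6⟫
      + (starRingEnd ℂ) ⟪b 3, x 5⟫ * ⟪b 3, x 6⟫ = 0 := by
    have h := hortho 5 6 (by decide)
    rw [hpar (x 5) (x 6), Fin.sum_univ_four, z60] at h
    simpa only [map_zero, zero_mul, mul_zero, add_zero, zero_add] using h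
  have e57 : (starRingEnd ℂ) ⟪b 2, x 5⟫ * ⟪b 2, x 7⟫
      + (starRingEnd ℂ) ⟪b 3, x 5⟫ * ⟪b 3, x 7⟫ = 0 := by
    have h := hortho 5 7 (by decide)
    rw [hpar (x 5) (x 7), Fin.sum_univ_four, z70, z71] at h
    simpa only [map_zero, zero_mul, mul_zero, add_zero, zero_add] using h
  have e67 : (starRingEnd ℂ) ⟪b 2, x 6⟫ * ⟪b 2, x 7⟫
      + (starRingEnd ℂ) ⟪b 3, x 6⟫ * ⟪b 3, x 7⟫ = 0 := by
    have h := hortho 6 7 (by decide)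
    rw [hpar (x 6) (x 7), Fin.sum_univ_four, z70, z71] at h
    simpa only [map_zero, zero_mul, mul_zero, add_zero, zero_add] using h
  -- abbreviations
  set a30 := ⟪b 0, x 3⟫ with ha30
  set a33 := ⟪b 3, x 3⟫ with ha33
  set a40 := ⟪b 0, x 4⟫ with ha40
  set a41 := ⟪b 1, x 4⟫ with ha41
  set a43 := ⟪b 3, x 4⟫ with ha43
  set a50 := ⟪b 0, x 5⟫ with ha50
  set a51 := ⟪b 1, x 5⟫ with ha51
  set a52 := ⟪b 2, x 5⟫ with ha52
  set a53 := ⟪b 3, x 5⟫ with ha53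
  set a61 := ⟪b 1, x 6⟫ with ha61
  set a62 := ⟪b 2, x 6⟫ with ha62
  set a63 := ⟪b 3, x 6⟫ with ha63
  set a72 := ⟪b 2, x 7⟫ with ha72
  set a73 := ⟪b 3, x 7⟫ with ha73
  -- conjugated equations
  have e34c : a30 * (starRingEnd ℂ) a40 + a33 * (starRingEnd ℂ) a43 = 0 := by
    have h := congrArg (starRingEnd ℂ) e34
    simpa only [map_add, map_mul, Complex.conj_conj, map_zero] using h
  have e35c : a30 * (starRingEnd ℂ) a50 + a33 * (starRingEnd ℂ) a53 = 0 := by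
    have h := congrArg (starRingEnd ℂ) e35
    simpa only [map_add, map_mul, Complex.conj_conj, map_zero] using h
  have e45c : a40 * (starRingEnd ℂ) a50 + a41 * (starRingEnd ℂ) a51
      + a43 * (starRingEnd ℂ) a53 = 0 := by
    have h := congrArg (starRingEnd ℂ) e45
    simpa only [map_add, map_mul, Complex.conj_conj, map_zero] using h
  have e67c : a62 * (starRingEnd ℂ) a72 + a63 * (starRingEnd ℂ) a73 = 0 := by
    have h := congrArg (starRingEnd ℂ) e67
    simpa only [map_add, map_mul, Complex.conj_conj, map_zero] using h
  -- derived identities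
  have hi : (starRingEnd ℂ) a41 * a61 * a33 * (starRingEnd ℂ) a73
      + a30 * (starRingEnd ℂ) a40 * a62 * (starRingEnd ℂ) a72 = 0 := by
    linear_combination a33 * (starRingEnd ℂ) a73 * e46 - a63 * (starRingEnd ℂ) a73 * e34c
      + a30 * (starRingEnd ℂ) a40 * e67c
  have hiic : a41 * (starRingEnd ℂ) a51 * (starRingEnd ℂ) a33 * a33
      + a40 * (starRingEnd ℂ) a50 * (a33 * (starRingEnd ℂ) a33 + a30 * (starRingEnd ℂ) a30)
      = 0 := by
    linear_combination (starRingEnd ℂ) a33 * a33 * e45c - a33 * (starRingEnd ℂ) a53 * e34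
      + (starRingEnd ℂ) a30 * a40 * e35c
  have hiiic : a30 * (starRingEnd ℂ) a50 * a73 - a33 * (starRingEnd ℂ) a52 * a72 = 0 := by
    linear_combination a73 * e35c - a33 * e57
  have FI : (starRingEnd ℂ) a52 * a62 * a33 *
      ((a41 * (starRingEnd ℂ) a41) * ((a33 * (starRingEnd ℂ) a33) * (a73 * (starRingEnd ℂ) a73))
        + (a72 * (starRingEnd ℂ) a72) *
          ((a40 * (starRingEnd ℂ) a40) * (a33 * (starRingEnd ℂ) a33 + a30 * (starRingEnd ℂ) a30)
            + (a41 * (starRingEnd ℂ) a41) * (a33 * (starRingEnd ℂ) a33))) = 0 := by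
    linear_combination
      (a41 * (starRingEnd ℂ) a41 * a33 * a33 * (starRingEnd ℂ) a33 * a73 * (starRingEnd ℂ) a73)
        * e56
      - a73 * ((starRingEnd ℂ) a41 * a61 * a33 * (starRingEnd ℂ) a73) * hiic
      + a73 * (a40 * (starRingEnd ℂ) a50
          * (a33 * (starRingEnd ℂ) a33 + a30 * (starRingEnd ℂ) a30)) * hi
      - (a40 * (starRingEnd ℂ) a40 * a62 * (starRingEnd ℂ) a72
          * (a33 * (starRingEnd ℂ) a33 + a30 * (starRingEnd ℂ) a30)) * hiiic
      - (a63 * (starRingEnd ℂ) a73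
          * (a41 * (starRingEnd ℂ) a41 * a33 * (starRingEnd ℂ) a33 * a73)) * e35c
      + (a30 * (starRingEnd ℂ) a50
          * (a41 * (starRingEnd ℂ) a41 * a33 * (starRingEnd ℂ) a33 * a73)) * e67c
      - (a62 * (starRingEnd ℂ) a72 * a41 * (starRingEnd ℂ) a41 * a33 * (starRingEnd ℂ) a33)
        * hiiic
  -- extract the real identity and contradict positivity
  have hc52 : (starRingEnd ℂ) a52 ≠ 0 := by
    intro h
    apply n52
    have := congrArg (starRingEnd ℂ) h
    simpa using this
  have hprod : (a41 * (starRingEnd ℂ) a41) * ((a33 * (starRingEnd ℂ) a33)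
        * (a73 * (starRingEnd ℂ) a73))
      + (a72 * (starRingEnd ℂ) a72) *
        ((a40 * (starRingEnd ℂ) a40) * (a33 * (starRingEnd ℂ) a33 + a30 * (starRingEnd ℂ) a30)
          + (a41 * (starRingEnd ℂ) a41) * (a33 * (starRingEnd ℂ) a33)) = 0 := by
    rcases mul_eq_zero.1 FI with h | h
    · rcases mul_eq_zero.1 h with h' | h'
      · rcases mul_eq_zero.1 h' with h'' | h''
        · exact absurd h'' hc52
        · exact absurd h'' n62
      · exact absurd h' n33
    · exact h
  simp only [Complex.mul_conj] at hprod
  have hR : Complex.normSq a41 * (Complex.normSq a33 * Complex.normSq a73)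
      + Complex.normSq a72 * (Complex.normSq a40 * (Complex.normSq a33 + Complex.normSq a30)
        + Complex.normSq a41 * Complex.normSq a33) = 0 := by exact_mod_cast hprod
  have p41 := Complex.normSq_pos.2 n41
  have p33 := Complex.normSq_pos.2 n33
  have p73 := Complex.normSq_pos.2 n73
  have h1 : 0 < Complex.normSq a41 * (Complex.normSq a33 * Complex.normSq a73) :=
    mul_pos p41 (mul_pos p33 p73)
  have h2 : 0 ≤ Complex.normSq a72 * (Complex.normSq a40
      * (Complex.normSq a33 + Complex.normSq a30)
      + Complex.normSq a41 * Complex.normSq a33) :=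
    mul_nonneg (Complex.normSq_nonneg _)
      (add_nonneg (mul_nonneg (Complex.normSq_nonneg _)
        (add_nonneg (Complex.normSq_nonneg _) (Complex.normSq_nonneg _)))
        (mul_nonneg (Complex.normSq_nonneg _) (Complex.normSq_nonneg _)))
  linarith

lemma hasFOR_mono {V : Type*} (G : SimpleGraph V) {d e : ℕ} (hde : d ≤ e)
    (h : HasFOR G d) : HasFOR G e := by
  rw [hasFOR_iff] at h ⊢
  obtain ⟨x, hx0, hsp, hadj⟩ := h
  obtain ⟨f, hinj, hsm, hin⟩ := embed_exists hde
  have hf0 : f 0 = 0 := by simpa using hsm 0 0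
  refine ⟨fun v => f (x v), ?_, ?_, ?_⟩
  · intro v hv
    exact hx0 v (hinj (hv.trans hf0.symm))
  · intro u v huv he
    apply hsp u v huv
    have h1 : f (x u) ∈ ℂ ∙ f (x v) := he ▸ Submodule.mem_span_singleton_self _
    obtain ⟨c, hc⟩ := Submodule.mem_span_singleton.1 h1
    rw [← hsm] at hc
    have hxu : x u = c • x v := (hinj hc).symm
    have hc0 : c ≠ 0 := by
      rintro rfl
      rw [zero_smul] at hxu
      exact hx0 u hxu
    rw [hxu, Submodule.span_singleton_smul_eq (isUnit_iff_ne_zero.2 hc0) _]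
  · intro u v huv
    rw [hadj u v huv, hin (x u) (x v)]

/-- The circulant graph `Ci₈(1,2)` on `ℤ/8ℤ` with connection set `{±1, ±2}`
satisfies `Ξ(Ci₈(1,2)) = 5`: it admits a faithful orthogonal representation in `ℂ⁵` but
none in `ℂ⁴`. -/
theorem stmt18 :
    Xi (SimpleGraph.circulantGraph ({1, 2} : Set (ZMod 8))) = 5 ∧
    HasFOR (SimpleGraph.circulantGraph ({1, 2} : Set (ZMod 8))) 5 ∧
    ¬ HasFOR (SimpleGraph.circulantGraph ({1, 2} : Set (ZMod 8))) 4 := by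
  refine ⟨?_, hasFOR5, noFOR4⟩
  unfold Xi
  refine le_antisymm (Nat.sInf_le hasFOR5) (le_csInf ⟨5, hasFOR5⟩ ?_)
  intro d hd
  by_contra hlt
  push_neg at hlt
  exact noFOR4 (hasFOR_mono _ (by omega : d ≤ 4) hd)
end
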